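/- The map F̄ on (1/2, 1] × [−1, ∞) defined by F̄(x,y) = (1/x − 1, 1/(1+y)) for x ∈ (1/2, 2/3] and F̄(x,y) = (−1/x + 2, −1/(2+y)) for x ∈ (2/3, 1] preserves the measure with density 1/(1+xy)² with respect to two-dimensional Lebesgue measure. -/

import Mathlib

open MeasureTheory

/-- The natural extension F̄ of the dual Gauss map F*, on (1/2,1] × [-1,∞). -/
noncomputable def dualNatExt (p : ℝ × ℝ) : ℝ × ℝ :=
  if p.1 ≤ 2 / 3 then (1 / p.1 - 1, 1 / (1 + p.2))
  else (-1 / p.1 + 2, -1 / (2 + p.2))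

namespace DualNatExtAux

noncomputable def T1 (p : ℝ × ℝ) : ℝ × ℝ := (1 / p.1 - 1, 1 / (1 + p.2))
noncomputable def T2 (p : ℝ × ℝ) : ℝ × ℝ := (-1 / p.1 + 2, -1 / (2 + p.2))

noncomputable def g (p : ℝ × ℝ) : ENNReal := ENNReal.ofReal (1 / (1 + p.1 * p.2) ^ 2)

def S1 : Set (ℝ × ℝ) := Set.Ioo (1/2 : ℝ) (2/3) ×ˢ Set.Ioi (-1 : ℝ)
def S2 : Set (ℝ × ℝ) := Set.Ioo (2/3 : ℝ) 1 ×ˢ Set.Ioi (-1 : ℝ)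

lemma measurableS1 : MeasurableSet S1 := measurableSet_Ioo.prod measurableSet_Ioi
lemma measurableS2 : MeasurableSet S2 := measurableSet_Ioo.prod measurableSet_Ioi

lemma measurableT1 : Measurable T1 := by unfold T1; fun_prop
lemma measurableT2 : Measurable T2 := by unfold T2; fun_prop

lemma det_diag (a b : ℝ) :
    ((a • ContinuousLinearMap.fst ℝ ℝ ℝ).prod (b • ContinuousLinearMap.snd ℝ ℝ ℝ)).det = a * b := by
  have : ((a • ContinuousLinearMap.fst ℝ ℝ ℝ).prod (b • ContinuousLinearMap.snd ℝ ℝ ℝ) :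
      ℝ × ℝ →ₗ[ℝ] ℝ × ℝ).det = a * b := by
    rw [← LinearMap.det_toMatrix (Module.Basis.finTwoProd ℝ)]
    have : (LinearMap.toMatrix (Module.Basis.finTwoProd ℝ) (Module.Basis.finTwoProd ℝ))
        ((a • ContinuousLinearMap.fst ℝ ℝ ℝ).prod (b • ContinuousLinearMap.snd ℝ ℝ ℝ) :
          ℝ × ℝ →ₗ[ℝ] ℝ × ℝ) = !![a, 0; 0, b] := by
      ext i j
      fin_cases i <;> fin_cases j <;>
        simp [LinearMap.toMatrix_apply, Module.Basis.finTwoProd]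
    rw [this, Matrix.det_fin_two_of]
    ring
  exact this

noncomputable def T1' (p : ℝ × ℝ) : ℝ × ℝ →L[ℝ] ℝ × ℝ :=
  ((-(p.1 ^ 2)⁻¹) • ContinuousLinearMap.fst ℝ ℝ ℝ).prod
    ((-((1 + p.2) ^ 2)⁻¹) • ContinuousLinearMap.snd ℝ ℝ ℝ)

noncomputable def T2' (p : ℝ × ℝ) : ℝ × ℝ →L[ℝ] ℝ × ℝ :=
  (((p.1 ^ 2)⁻¹) • ContinuousLinearMap.fst ℝ ℝ ℝ).prod
    ((((2 + p.2) ^ 2)⁻¹) • ContinuousLinearMap.snd ℝ ℝ ℝ)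

lemma hasFDerivT1 {p : ℝ × ℝ} (hx : p.1 ≠ 0) (hy : (1 : ℝ) + p.2 ≠ 0) :
    HasFDerivAt T1 (T1' p) p := by
  have hfst : HasFDerivAt (fun q : ℝ × ℝ => q.1) (ContinuousLinearMap.fst ℝ ℝ ℝ) p :=
    hasFDerivAt_fst
  have hsnd : HasFDerivAt (fun q : ℝ × ℝ => q.2) (ContinuousLinearMap.snd ℝ ℝ ℝ) p :=
    hasFDerivAt_snd
  have c1 : HasFDerivAt (fun q : ℝ × ℝ => 1 / q.1 - 1)
      ((-(p.1 ^ 2)⁻¹) • ContinuousLinearMap.fst ℝ ℝ ℝ) p := by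
    have eq1 : (-(p.1 ^ 2)⁻¹ : ℝ) • ContinuousLinearMap.fst ℝ ℝ ℝ
        = -((p.1 ^ 2)⁻¹ • ContinuousLinearMap.fst ℝ ℝ ℝ) := by
      refine ContinuousLinearMap.ext fun q => ?_
      simp [neg_mul]
    rw [eq1]
    have h := (hasDerivAt_inv hx).comp_hasFDerivAt p hfst
    simpa [one_div, Function.comp] using h.sub_const 1
  have c2 : HasFDerivAt (fun q : ℝ × ℝ => 1 / (1 + q.2))
      ((-((1 + p.2) ^ 2)⁻¹) • ContinuousLinearMap.snd ℝ ℝ ℝ) p := by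
    have hg : HasFDerivAt (fun q : ℝ × ℝ => 1 + q.2) (ContinuousLinearMap.snd ℝ ℝ ℝ) p :=
      hsnd.const_add 1
    have eq2 : (-((1 + p.2) ^ 2)⁻¹ : ℝ) • ContinuousLinearMap.snd ℝ ℝ ℝ
        = -(((1 + p.2) ^ 2)⁻¹ • ContinuousLinearMap.snd ℝ ℝ ℝ) := by
      refine ContinuousLinearMap.ext fun q => ?_
      simp [neg_mul]
    rw [eq2]
    have h := (hasDerivAt_inv hy).comp_hasFDerivAt p hg
    simpa [one_div, Function.comp_def] using h
  exact c1.prodMk c2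

lemma hasFDerivT2 {p : ℝ × ℝ} (hx : p.1 ≠ 0) (hy : (2 : ℝ) + p.2 ≠ 0) :
    HasFDerivAt T2 (T2' p) p := by
  have hfst : HasFDerivAt (fun q : ℝ × ℝ => q.1) (ContinuousLinearMap.fst ℝ ℝ ℝ) p :=
    hasFDerivAt_fst
  have hsnd : HasFDerivAt (fun q : ℝ × ℝ => q.2) (ContinuousLinearMap.snd ℝ ℝ ℝ) p :=
    hasFDerivAt_snd
  have c1 : HasFDerivAt (fun q : ℝ × ℝ => -1 / q.1 + 2)
      (((p.1 ^ 2)⁻¹) • ContinuousLinearMap.fst ℝ ℝ ℝ) p := by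
    have h := (((hasDerivAt_inv hx).comp_hasFDerivAt p hfst).neg).add_const 2
    simpa [one_div, Function.comp, neg_div] using h
  have c2 : HasFDerivAt (fun q : ℝ × ℝ => -1 / (2 + q.2))
      ((((2 + p.2) ^ 2)⁻¹) • ContinuousLinearMap.snd ℝ ℝ ℝ) p := by
    have hg : HasFDerivAt (fun q : ℝ × ℝ => 2 + q.2) (ContinuousLinearMap.snd ℝ ℝ ℝ) p :=
      hsnd.const_add 2
    have h := ((hasDerivAt_inv hy).comp_hasFDerivAt p hg).neg
    simpa [one_div, Function.comp_def, neg_div, Pi.neg_def] using h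
  exact c1.prodMk c2

lemma injT1 : Set.InjOn T1 S1 := by
  rintro p ⟨_, _⟩ q ⟨_, _⟩ h
  have h1 : 1 / p.1 - 1 = 1 / q.1 - 1 := congrArg Prod.fst h
  have h2 : 1 / (1 + p.2) = 1 / (1 + q.2) := congrArg Prod.snd h
  have h1' : (p.1)⁻¹ = (q.1)⁻¹ := by
    rw [one_div, one_div] at h1; linarith
  have h2' : ((1:ℝ) + p.2)⁻¹ = (1 + q.2)⁻¹ := by
    rw [one_div, one_div] at h2; linarith
  have e1 : p.1 = q.1 := inv_inj.mp h1'
  have e2 : p.2 = q.2 := by have := inv_inj.mp h2'; linarith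
  exact Prod.ext e1 e2

lemma injT2 : Set.InjOn T2 S2 := by
  rintro p ⟨_, _⟩ q ⟨_, _⟩ h
  have h1 : -1 / p.1 + 2 = -1 / q.1 + 2 := congrArg Prod.fst h
  have h2 : -1 / (2 + p.2) = -1 / (2 + q.2) := congrArg Prod.snd h
  rw [neg_div, neg_div, one_div, one_div] at h1 h2
  have h1' : (p.1)⁻¹ = (q.1)⁻¹ := by linarith
  have h2' : ((2:ℝ) + p.2)⁻¹ = (2 + q.2)⁻¹ := by linarith
  have e1 : p.1 = q.1 := inv_inj.mp h1'
  have e2 : p.2 = q.2 := by have := inv_inj.mp h2'; linarith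
  exact Prod.ext e1 e2

lemma imageT1 : T1 '' S1 = Set.Ioo (1/2 : ℝ) 1 ×ˢ Set.Ioi (0 : ℝ) := by
  ext ⟨u, v⟩
  constructor
  · rintro ⟨⟨x, y⟩, ⟨⟨hx1, hx2⟩, hy⟩, h⟩
    simp only [T1, Prod.mk.injEq] at h
    obtain ⟨hu, hv⟩ := h
    simp only [Set.mem_Ioi] at hy
    have hx1' : (1:ℝ)/2 < x := hx1
    have hx2' : x < 2/3 := hx2
    have hy' : (-1:ℝ) < y := hy
    have hx0 : (0:ℝ) < x := by linarith
    have hy0 : (0:ℝ) < 1 + y := by linarith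
    refine ⟨⟨?_, ?_⟩, ?_⟩
    · show (1:ℝ)/2 < u
      rw [← hu]
      have : (3:ℝ)/2 < 1/x := by rw [lt_div_iff₀ hx0]; linarith
      linarith
    · show u < 1
      rw [← hu]
      have : (1:ℝ)/x < 2 := by rw [div_lt_iff₀ hx0]; linarith
      linarith
    · show (0:ℝ) < v
      rw [← hv]; exact one_div_pos.mpr hy0
  · rintro ⟨⟨hu1, hu2⟩, hv⟩
    have hu1' : (1:ℝ)/2 < u := hu1
    have hu2' : u < 1 := hu2
    have hv0 : (0:ℝ) < v := hv
    have h1u : (0:ℝ) < 1 + u := by linarith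
    refine ⟨(1/(1+u), 1/v - 1), ⟨⟨?_, ?_⟩, ?_⟩, ?_⟩
    · show (1:ℝ)/2 < 1/(1+u)
      rw [lt_div_iff₀ h1u]; linarith
    · show (1:ℝ)/(1+u) < 2/3
      rw [div_lt_iff₀ h1u]; linarith
    · show (-1:ℝ) < 1/v - 1
      have : (0:ℝ) < 1/v := one_div_pos.mpr hv0
      linarith
    · simp only [T1, Prod.mk.injEq]
      constructor
      · rw [one_div_one_div]; ring
      · have e : (1:ℝ) + (1/v - 1) = 1/v := by ring
        rw [e, one_div_one_div]

lemma imageT2 : T2 '' S2 = Set.Ioo (1/2 : ℝ) 1 ×ˢ Set.Ioo (-1 : ℝ) 0 := by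
  ext ⟨u, v⟩
  constructor
  · rintro ⟨⟨x, y⟩, ⟨⟨hx1, hx2⟩, hy⟩, h⟩
    simp only [T2, Prod.mk.injEq] at h
    obtain ⟨hu, hv⟩ := h
    simp only [Set.mem_Ioi] at hy
    have hx1' : (2:ℝ)/3 < x := hx1
    have hx2' : x < 1 := hx2
    have hy' : (-1:ℝ) < y := hy
    have hx0 : (0:ℝ) < x := by linarith
    have hy0 : (1:ℝ) < 2 + y := by linarith
    have hy0' : (0:ℝ) < 2 + y := by linarith
    refine ⟨⟨?_, ?_⟩, ?_, ?_⟩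
    · show (1:ℝ)/2 < u
      rw [← hu]
      have h1 : (1:ℝ)/x < 3/2 := by rw [div_lt_iff₀ hx0]; linarith
      have h2 : -1/x > -(3/2 : ℝ) := by rw [neg_div]; linarith
      linarith
    · show u < 1
      rw [← hu]
      have h1 : (1:ℝ) < 1/x := by rw [lt_div_iff₀ hx0]; linarith
      have h2 : -1/x < -(1:ℝ) := by rw [neg_div]; linarith
      linarith
    · show (-1:ℝ) < v
      rw [← hv]
      have h1 : (1:ℝ)/(2+y) < 1 := by rw [div_lt_iff₀ hy0']; linarith
      rw [neg_div]; linarith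
    · show v < 0
      rw [← hv]
      have h1 : (0:ℝ) < 1/(2+y) := one_div_pos.mpr hy0'
      rw [neg_div]; linarith
  · rintro ⟨⟨hu1, hu2⟩, hv1, hv2⟩
    have hu1' : (1:ℝ)/2 < u := hu1
    have hu2' : u < 1 := hu2
    have hv1' : (-1:ℝ) < v := hv1
    have hv2' : v < 0 := hv2
    have h2u : (0:ℝ) < 2 - u := by linarith
    have hnv : (0:ℝ) < -v := by linarith
    have hv0 : v ≠ 0 := by linarith
    refine ⟨(1/(2-u), -1/v - 2), ⟨⟨?_, ?_⟩, ?_⟩, ?_⟩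
    · show (2:ℝ)/3 < 1/(2-u)
      rw [div_lt_div_iff₀ (by norm_num) h2u]; linarith
    · show (1:ℝ)/(2-u) < 1
      rw [div_lt_one h2u]; linarith
    · show (-1:ℝ) < -1/v - 2
      have h1 : (1:ℝ) < 1/(-v) := by rw [lt_div_iff₀ hnv]; nlinarith
      have h2 : -1/v = 1/(-v) := by rw [neg_div, div_neg]
      linarith [h2 ▸ h1]
    · simp only [T2, Prod.mk.injEq]
      constructor
      · rw [neg_div, one_div_one_div]; ring
      · have e : (2:ℝ) + (-1/v - 2) = -(1/v) := by rw [neg_div]; ring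
        rw [e, div_neg, neg_div, neg_neg, one_div_one_div]

lemma branch1 (A : Set (ℝ × ℝ)) (hA : MeasurableSet A) :
    ∫⁻ p in A ∩ Set.Ioo (1/2 : ℝ) 1 ×ˢ Set.Ioi (0 : ℝ), g p
      = ∫⁻ p in T1 ⁻¹' A ∩ S1, g p := by
  have hs : MeasurableSet (T1 ⁻¹' A ∩ S1) := (measurableT1 hA).inter measurableS1
  have himg : T1 '' (T1 ⁻¹' A ∩ S1) = A ∩ Set.Ioo (1/2 : ℝ) 1 ×ˢ Set.Ioi (0 : ℝ) := by
    rw [Set.image_preimage_inter, imageT1]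
  rw [← himg]
  rw [lintegral_image_eq_lintegral_abs_det_fderiv_mul volume hs
    (fun p hp => (hasFDerivT1 (p := p) ?_ ?_).hasFDerivWithinAt)
    (injT1.mono Set.inter_subset_right) g]
  · refine setLIntegral_congr_fun hs ?_
    rintro ⟨x, y⟩ ⟨_, ⟨hx1, hx2⟩, hy⟩
    simp only [Set.mem_Ioi] at hy
    have hx1' : (1:ℝ)/2 < x := hx1
    have hx2' : x < 2/3 := hx2
    have hy' : (-1:ℝ) < y := hy
    have hx0 : (0:ℝ) < x := by linarith
    have hy0 : (0:ℝ) < 1 + y := by linarith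
    have hxy : (0:ℝ) < 1 + x * y := by nlinarith
    have hx0' : x ≠ 0 := ne_of_gt hx0
    have hy0' : (1:ℝ) + y ≠ 0 := ne_of_gt hy0
    have hxy' : (1:ℝ) + x * y ≠ 0 := ne_of_gt hxy
    show ENNReal.ofReal |(T1' (x, y)).det| * g (T1 (x, y)) = g (x, y)
    simp only [T1', det_diag, g, T1]
    have habs : |(-(x ^ 2)⁻¹) * (-((1 + y) ^ 2)⁻¹)| = (x ^ 2)⁻¹ * ((1 + y) ^ 2)⁻¹ := by
      rw [neg_mul_neg]; exact abs_of_nonneg (by positivity)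
    rw [← ENNReal.ofReal_mul (abs_nonneg _)]
    congr 1
    rw [habs]
    have key : 1 + (1/x - 1) * (1/(1+y)) = (1 + x*y) / (x * (1+y)) := by
      field_simp; ring
    rw [key, div_pow, one_div_div]
    field_simp
  · rcases hp with ⟨_, ⟨hx1, _⟩, _⟩
    have : (1:ℝ)/2 < p.1 := hx1
    exact ne_of_gt (by linarith)
  · rcases hp with ⟨_, _, hy⟩
    have : (-1:ℝ) < p.2 := hy
    exact ne_of_gt (by linarith)

lemma branch2 (A : Set (ℝ × ℝ)) (hA : MeasurableSet A) :
    ∫⁻ p in A ∩ Set.Ioo (1/2 : ℝ) 1 ×ˢ Set.Ioo (-1 : ℝ) 0, g p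
      = ∫⁻ p in T2 ⁻¹' A ∩ S2, g p := by
  have hs : MeasurableSet (T2 ⁻¹' A ∩ S2) := (measurableT2 hA).inter measurableS2
  have himg : T2 '' (T2 ⁻¹' A ∩ S2) = A ∩ Set.Ioo (1/2 : ℝ) 1 ×ˢ Set.Ioo (-1 : ℝ) 0 := by
    rw [Set.image_preimage_inter, imageT2]
  rw [← himg]
  rw [lintegral_image_eq_lintegral_abs_det_fderiv_mul volume hs
    (fun p hp => (hasFDerivT2 (p := p) ?_ ?_).hasFDerivWithinAt)
    (injT2.mono Set.inter_subset_right) g]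
  · refine setLIntegral_congr_fun hs ?_
    rintro ⟨x, y⟩ ⟨_, ⟨hx1, hx2⟩, hy⟩
    simp only [Set.mem_Ioi] at hy
    have hx1' : (2:ℝ)/3 < x := hx1
    have hx2' : x < 1 := hx2
    have hy' : (-1:ℝ) < y := hy
    have hx0 : (0:ℝ) < x := by linarith
    have hy0 : (0:ℝ) < 2 + y := by linarith
    have hxy : (0:ℝ) < 1 + x * y := by nlinarith
    have hx0' : x ≠ 0 := ne_of_gt hx0
    have hy0' : (2:ℝ) + y ≠ 0 := ne_of_gt hy0
    have hxy' : (1:ℝ) + x * y ≠ 0 := ne_of_gt hxy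
    show ENNReal.ofReal |(T2' (x, y)).det| * g (T2 (x, y)) = g (x, y)
    simp only [T2', det_diag, g, T2]
    have habs : |(x ^ 2)⁻¹ * ((2 + y) ^ 2)⁻¹| = (x ^ 2)⁻¹ * ((2 + y) ^ 2)⁻¹ :=
      abs_of_nonneg (by positivity)
    rw [← ENNReal.ofReal_mul (abs_nonneg _)]
    congr 1
    rw [habs]
    have key : 1 + (-1/x + 2) * (-1/(2+y)) = (1 + x*y) / (x * (2+y)) := by
      field_simp; ring
    rw [key, div_pow, one_div_div]
    field_simp
  · rcases hp with ⟨_, ⟨hx1, _⟩, _⟩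
    have : (2:ℝ)/3 < p.1 := hx1
    exact ne_of_gt (by linarith)
  · rcases hp with ⟨_, _, hy⟩
    have : (-1:ℝ) < p.2 := hy
    exact ne_of_gt (by linarith)

lemma vert_null (c : ℝ) : volume (({c} : Set ℝ) ×ˢ (Set.univ : Set ℝ)) = 0 := by
  rw [Measure.volume_eq_prod, Measure.prod_prod]; simp

lemma horiz_null (c : ℝ) : volume ((Set.univ : Set ℝ) ×ˢ ({c} : Set ℝ)) = 0 := by
  rw [Measure.volume_eq_prod, Measure.prod_prod]; simp

def N : Set (ℝ × ℝ) :=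
  (({(2/3 : ℝ)} : Set ℝ) ×ˢ (Set.univ : Set ℝ)) ∪
  (({(1 : ℝ)} : Set ℝ) ×ˢ (Set.univ : Set ℝ)) ∪
  ((Set.univ : Set ℝ) ×ˢ ({(-1 : ℝ)} : Set ℝ)) ∪
  ((Set.univ : Set ℝ) ×ˢ ({(0 : ℝ)} : Set ℝ))

lemma N_null : volume N = 0 := by
  refine measure_union_null (measure_union_null (measure_union_null ?_ ?_) ?_) ?_ <;>
    first | exact vert_null _ | exact horiz_null _

end DualNatExtAux

open DualNatExtAux in
/-- F̄ preserves the measure with density 1/(1+xy)² on (1/2,1] × [-1,∞). -/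
theorem dualNatExt_invariant_measure :
    ∀ A : Set (ℝ × ℝ), MeasurableSet A →
      A ⊆ Set.Ioc (1 / 2 : ℝ) 1 ×ˢ Set.Ici (-1 : ℝ) →
      ∫⁻ p in dualNatExt ⁻¹' A ∩ Set.Ioc (1 / 2 : ℝ) 1 ×ˢ Set.Ici (-1 : ℝ),
        ENNReal.ofReal (1 / (1 + p.1 * p.2) ^ 2) =
      ∫⁻ p in A, ENNReal.ofReal (1 / (1 + p.1 * p.2) ^ 2) := by
  intro A hA hAsub
  show ∫⁻ p in dualNatExt ⁻¹' A ∩ Set.Ioc (1 / 2 : ℝ) 1 ×ˢ Set.Ici (-1 : ℝ), g p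
      = ∫⁻ p in A, g p
  set D : Set (ℝ × ℝ) := Set.Ioc (1 / 2 : ℝ) 1 ×ˢ Set.Ici (-1 : ℝ) with hD
  set s1 : Set (ℝ × ℝ) := T1 ⁻¹' A ∩ S1 with hs1
  set s2 : Set (ℝ × ℝ) := T2 ⁻¹' A ∩ S2 with hs2
  set Ap : Set (ℝ × ℝ) := A ∩ Set.Ioo (1/2 : ℝ) 1 ×ˢ Set.Ioi (0 : ℝ) with hApdef
  set Am : Set (ℝ × ℝ) := A ∩ Set.Ioo (1/2 : ℝ) 1 ×ˢ Set.Ioo (-1 : ℝ) 0 with hAmdef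
  have hs1m : MeasurableSet s1 := (measurableT1 hA).inter measurableS1
  have hs2m : MeasurableSet s2 := (measurableT2 hA).inter measurableS2
  have hAmm : MeasurableSet Am := hA.inter (measurableSet_Ioo.prod measurableSet_Ioo)
  -- F̄ agrees with T1 / T2
  have hFT1 : ∀ p : ℝ × ℝ, p.1 ≤ 2/3 → dualNatExt p = T1 p := by
    intro p hp; simp only [dualNatExt, T1]; rw [if_pos hp]
  have hFT2 : ∀ p : ℝ × ℝ, ¬ p.1 ≤ 2/3 → dualNatExt p = T2 p := by
    intro p hp; simp only [dualNatExt, T2]; rw [if_neg hp]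
  have hsub12 : s1 ∪ s2 ⊆ dualNatExt ⁻¹' A ∩ D := by
    rintro p hp
    rcases hp with ⟨hmem, ⟨hx1, hx2⟩, hy⟩ | ⟨hmem, ⟨hx1, hx2⟩, hy⟩
    · have hx1' : (1:ℝ)/2 < p.1 := hx1
      have hx2' : p.1 < 2/3 := hx2
      have hy' : (-1:ℝ) < p.2 := hy
      refine ⟨?_, ⟨hx1', by linarith⟩, le_of_lt hy'⟩
      simp only [Set.mem_preimage, hFT1 p (le_of_lt hx2')]
      exact hmem
    · have hx1' : (2:ℝ)/3 < p.1 := hx1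
      have hx2' : p.1 ≤ 1 := le_of_lt hx2
      have hy' : (-1:ℝ) < p.2 := hy
      refine ⟨?_, ⟨by linarith, hx2'⟩, le_of_lt hy'⟩
      simp only [Set.mem_preimage, hFT2 p (not_le.mpr hx1')]
      exact hmem
  have hLae : (dualNatExt ⁻¹' A ∩ D : Set (ℝ × ℝ)) =ᵐ[volume] (s1 ∪ s2 : Set (ℝ × ℝ)) := by
    rw [MeasureTheory.ae_eq_set]
    constructor
    · refine measure_mono_null ?_ N_null
      rintro p ⟨⟨hmem, ⟨hx1, hx2⟩, hy⟩, hnot⟩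
      have hx1' : (1:ℝ)/2 < p.1 := hx1
      have hx2' : p.1 ≤ 1 := hx2
      have hy' : (-1:ℝ) ≤ p.2 := hy
      by_cases hym : p.2 = -1
      · exact Or.inl (Or.inr ⟨Set.mem_univ _, hym⟩)
      have hygt : (-1:ℝ) < p.2 := lt_of_le_of_ne hy' (Ne.symm hym)
      by_cases hxm : p.1 = 2/3
      · exact Or.inl (Or.inl (Or.inl ⟨hxm, Set.mem_univ _⟩))
      by_cases hxo : p.1 = 1
      · exact Or.inl (Or.inl (Or.inr ⟨hxo, Set.mem_univ _⟩))
      exfalso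
      rcases lt_or_gt_of_ne hxm with h23 | h23
      · exact hnot (Or.inl ⟨by
          simpa only [Set.mem_preimage, hFT1 p (le_of_lt h23)] using hmem,
          ⟨hx1', h23⟩, hygt⟩)
      · exact hnot (Or.inr ⟨by
          simpa only [Set.mem_preimage, hFT2 p (not_le.mpr h23)] using hmem,
          ⟨h23, lt_of_le_of_ne hx2' hxo⟩, hygt⟩)
    · rw [Set.diff_eq_empty.mpr hsub12]; simp
  have hRae : (A : Set (ℝ × ℝ)) =ᵐ[volume] (Ap ∪ Am : Set (ℝ × ℝ)) := by
    rw [MeasureTheory.ae_eq_set]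
    constructor
    · refine measure_mono_null ?_ N_null
      rintro p ⟨hmem, hnot⟩
      obtain ⟨⟨hx1, hx2⟩, hy⟩ := hAsub hmem
      have hx1' : (1:ℝ)/2 < p.1 := hx1
      have hx2' : p.1 ≤ 1 := hx2
      have hy' : (-1:ℝ) ≤ p.2 := hy
      by_cases hxo : p.1 = 1
      · exact Or.inl (Or.inl (Or.inr ⟨hxo, Set.mem_univ _⟩))
      have hxlt : p.1 < 1 := lt_of_le_of_ne hx2' hxo
      by_cases hym : p.2 = -1
      · exact Or.inl (Or.inr ⟨Set.mem_univ _, hym⟩)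
      have hygt : (-1:ℝ) < p.2 := lt_of_le_of_ne hy' (Ne.symm hym)
      by_cases hy0 : p.2 = 0
      · exact Or.inr ⟨Set.mem_univ _, hy0⟩
      exfalso
      rcases lt_or_gt_of_ne hy0 with hlt | hgt
      · exact hnot (Or.inr ⟨hmem, ⟨hx1', hxlt⟩, hygt, hlt⟩)
      · exact hnot (Or.inl ⟨hmem, ⟨hx1', hxlt⟩, hgt⟩)
    · have : Ap ∪ Am ⊆ A := by
        rintro p (⟨h, _⟩ | ⟨h, _⟩) <;> exact h
      rw [Set.diff_eq_empty.mpr this]; simp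
  have hdisj12 : Disjoint s1 s2 := by
    rw [Set.disjoint_left]
    rintro p ⟨_, ⟨_, hx2⟩, _⟩ ⟨_, ⟨hx1, _⟩, _⟩
    have h1 : p.1 < 2/3 := hx2
    have h2 : (2:ℝ)/3 < p.1 := hx1
    linarith
  have hdisjA : Disjoint Ap Am := by
    rw [Set.disjoint_left]
    rintro p ⟨_, _, hy1⟩ ⟨_, _, _, hy2⟩
    have h1 : (0:ℝ) < p.2 := hy1
    have h2 : p.2 < 0 := hy2
    linarith
  calc ∫⁻ p in dualNatExt ⁻¹' A ∩ D, g p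
      = ∫⁻ p in s1 ∪ s2, g p := setLIntegral_congr hLae
    _ = (∫⁻ p in s1, g p) + ∫⁻ p in s2, g p := lintegral_union hs2m hdisj12
    _ = (∫⁻ p in Ap, g p) + ∫⁻ p in Am, g p := by
        rw [branch1 A hA, branch2 A hA]
    _ = ∫⁻ p in Ap ∪ Am, g p := (lintegral_union hAmm hdisjA).symm
    _ = ∫⁻ p in A, g p := (setLIntegral_congr hRae).symm
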